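/- The restriction of the homogenized type-C Bernoulli-like polynomial to z=0 satisfies B̄^C_{r,s}(x,0) = 2·B̄^B_{r,s}(x,0); that is, B̄^C_{r,s}(x,0) = (-1)^s · 2x^{r+2s}/(r+2s) if r is odd, and 0 if r is even. -/

import Mathlib

open Polynomial Finset

lemma comp_X_add_one_coeff (P : ℝ[X]) (n k : ℕ) (hn : P.natDegree ≤ n) :
    (P.comp (X + 1)).coeff k
      = ∑ i ∈ Finset.range (n + 1), P.coeff i * (i.choose k : ℝ) := by
  conv_lhs => rw [P.as_sum_range' (n + 1) (by omega)]
  rw [Polynomial.comp, Polynomial.eval₂_finset_sum, Polynomial.finset_sum_coeff]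
  refine Finset.sum_congr rfl fun i _ => ?_
  rw [← Polynomial.comp, Polynomial.monomial_comp, Polynomial.coeff_C_mul,
    Polynomial.coeff_X_add_one_pow]

lemma delta_top_coeff (P : ℝ[X]) (n : ℕ) (hn : P.natDegree ≤ n) (h0 : 0 < n) :
    (P.comp (X + 1) - P).coeff (n - 1) = n * P.coeff n := by
  rw [Polynomial.coeff_sub, comp_X_add_one_coeff P n _ hn]
  rw [Finset.sum_range_succ]
  have h1 : ∑ i ∈ Finset.range n, P.coeff i * (i.choose (n - 1) : ℝ)
      = P.coeff (n - 1) := by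
    rw [Finset.sum_eq_single (n - 1)]
    · simp
    · intro i hi hne
      rw [Finset.mem_range] at hi
      rcases lt_or_ge i (n - 1) with h | h
      · rw [Nat.choose_eq_zero_of_lt h]; simp
      · exact absurd (by omega : i = n - 1) hne
    · intro h; exact absurd (Finset.mem_range.mpr (by omega)) h
  have hch : n.choose (n - 1) = n := by
    rw [← Nat.choose_symm (Nat.sub_le n 1)]
    have h2 : n - (n - 1) = 1 := by omega
    rw [h2, Nat.choose_one_right]
  rw [h1, hch]
  ring

lemma sum_zero_pow (c : ℕ → ℝ) (n : ℕ) :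
    ∑ i ∈ Finset.range (n + 1), C (c i) * X ^ i * (0 : ℝ[X]) ^ (n - i)
      = C (c n) * X ^ n := by
  rw [Finset.sum_eq_single n]
  · simp
  · intro i hi hne
    rw [Finset.mem_range] at hi
    rw [zero_pow (by omega : n - i ≠ 0), mul_zero]
  · intro h; exact absurd (Finset.self_mem_range_succ n) h

lemma negX_pow_coeff (s : ℕ) : ((-X : ℝ[X]) ^ s).coeff s = (-1 : ℝ) ^ s := by
  rw [neg_pow, show ((-1 : ℝ[X]) ^ s * X ^ s) = C ((-1 : ℝ) ^ s) * X ^ s by simp,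
    Polynomial.coeff_C_mul, Polynomial.coeff_X_pow, if_pos rfl, mul_one]

theorem stmt13 (r s : ℕ) (hr : 0 < r) (Q BB BC : ℝ[X])
    (hQ : (2 * X + 1) * Q = (X + 1) ^ r - (-X) ^ r)
    (hBB : BB.comp (X + 1) - BB = Q * (X + 1) ^ s * (-X) ^ s)
    (hBB0 : BB.eval 0 = 0)
    (hBC : BC.comp (X + 1) - BC
      = ((X + 1) ^ (r - 1) + (-X) ^ (r - 1)) * (X + 1) ^ s * (-X) ^ s)
    (hBC0 : BC.eval 0 = 0) :
    (∑ i ∈ Finset.range (r + 2 * s + 1),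
        C (BC.coeff i) * X ^ i * (0 : ℝ[X]) ^ (r + 2 * s - i))
      = 2 * (∑ i ∈ Finset.range (r + 2 * s + 1),
        C (BB.coeff i) * X ^ i * (0 : ℝ[X]) ^ (r + 2 * s - i))
    ∧ (Odd r →
      (∑ i ∈ Finset.range (r + 2 * s + 1),
          C (BC.coeff i) * X ^ i * (0 : ℝ[X]) ^ (r + 2 * s - i))
        = C ((-1 : ℝ) ^ s * 2 / ((r : ℝ) + 2 * s)) * X ^ (r + 2 * s))
    ∧ (Even r →
      (∑ i ∈ Finset.range (r + 2 * s + 1),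
          C (BC.coeff i) * X ^ i * (0 : ℝ[X]) ^ (r + 2 * s - i)) = 0) := by
  set n := r + 2 * s with hn
  have npos : 0 < n := by omega
  have hnR : (n : ℝ) ≠ 0 := by positivity
  -- degree bounds for the RHS polynomials
  have hdC : (((X + 1) ^ (r - 1) + (-X) ^ (r - 1) : ℝ[X]) * (X + 1) ^ s * (-X) ^ s).natDegree
      ≤ r - 1 + s + s := by compute_degree
  have hQdeg : Q.natDegree ≤ r - 1 := by
    by_cases hQ0 : Q = 0
    · simp [hQ0]
    · have h20 : (2 * X + 1 : ℝ[X]) ≠ 0 := by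
        intro h
        have h3 := congrArg (eval 1) h
        simp at h3
        norm_num at h3
      have hd1 : (2 * X + 1 : ℝ[X]).natDegree = 1 := by compute_degree!
      have h1 : ((2 * X + 1 : ℝ[X]) * Q).natDegree = 1 + Q.natDegree := by
        rw [natDegree_mul h20 hQ0, hd1]
      have h2 : (((X : ℝ[X]) + 1) ^ r - (-X) ^ r).natDegree ≤ r := by compute_degree
      rw [hQ] at h1
      omega
  have hdB : ((Q * (X + 1) ^ s * (-X) ^ s : ℝ[X])).natDegree ≤ r - 1 + s + s := by
    apply natDegree_mul_le.trans
    have h2 : ((Q * ((X : ℝ[X]) + 1) ^ s)).natDegree ≤ r - 1 + s :=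
      natDegree_mul_le.trans (by
        have : (((X : ℝ[X]) + 1) ^ s).natDegree ≤ s := by compute_degree
        omega)
    have h3 : ((-X : ℝ[X]) ^ s).natDegree ≤ s := by compute_degree
    omega
  -- natDegree bounds for BB, BC
  have degbound : ∀ (P R : ℝ[X]), P.comp (X + 1) - P = R → R.natDegree ≤ r - 1 + s + s →
      P.natDegree ≤ n := by
    intro P R hPR hR
    by_contra hcon
    push_neg at hcon
    have hPne : P ≠ 0 := by
      intro h0; rw [h0] at hcon; simp at hcon
    have hd := delta_top_coeff P P.natDegree le_rfl (by omega)
    rw [hPR] at hd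
    have hz : R.coeff (P.natDegree - 1) = 0 :=
      coeff_eq_zero_of_natDegree_lt (by omega)
    rw [hz] at hd
    have hlc : P.coeff P.natDegree ≠ 0 := by
      rw [← Polynomial.leadingCoeff]
      exact leadingCoeff_ne_zero.mpr hPne
    have hdne : (P.natDegree : ℝ) ≠ 0 := by
      have : 0 < P.natDegree := by omega
      positivity
    exact (mul_ne_zero hdne hlc) hd.symm
  have hBCdeg : BC.natDegree ≤ n := degbound _ _ hBC hdC
  have hBBdeg : BB.natDegree ≤ n := degbound _ _ hBB hdB
  -- coefficient of Q at r-1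
  have hQr : Q.coeff r = 0 := coeff_eq_zero_of_natDegree_lt (by omega)
  have hQc : Q.coeff (r - 1) * 2 = 1 - (-1 : ℝ) ^ r := by
    have h := congrArg (fun p => Polynomial.coeff p r) hQ
    have hx : ((X : ℝ[X]) * Q).coeff r = Q.coeff (r - 1) := by
      conv_lhs => rw [show r = (r - 1) + 1 from by omega]
      rw [Polynomial.coeff_X_mul]
    have hl : ((2 * X + 1 : ℝ[X]) * Q).coeff r = 2 * Q.coeff (r - 1) + Q.coeff r := by
      have hsplit : (2 * X + 1 : ℝ[X]) * Q = 2 * (X * Q) + Q := by ring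
      rw [hsplit, Polynomial.coeff_add, show (2 : ℝ[X]) = C 2 from (map_ofNat C 2).symm,
        Polynomial.coeff_C_mul, hx]
    have hrr2 : (((X : ℝ[X]) + 1) ^ r - (-X) ^ r).coeff r = 1 - (-1 : ℝ) ^ r := by
      rw [Polynomial.coeff_sub, Polynomial.coeff_X_add_one_pow, Nat.choose_self,
        negX_pow_coeff]
      simp
    rw [hl, hrr2, hQr] at h
    linarith
  -- generic top-coefficient computation for the RHS products
  have topcoeff : ∀ (A : ℝ[X]) (a : ℝ), A.natDegree ≤ r - 1 → A.coeff (r - 1) = a →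
      ((A * (X + 1) ^ s * (-X) ^ s : ℝ[X])).coeff (n - 1) = a * (-1 : ℝ) ^ s := by
    intro A a hA ha
    have h1 : (((X : ℝ[X]) + 1) ^ s).natDegree ≤ s := by compute_degree
    have h2 : ((-X : ℝ[X]) ^ s).natDegree ≤ s := by compute_degree
    have hAm : (A * (X + 1) ^ s : ℝ[X]).natDegree ≤ r - 1 + s :=
      natDegree_mul_le.trans (by omega)
    have hne : n - 1 = (r - 1 + s) + s := by omega
    rw [hne, coeff_mul_add_eq_of_natDegree_le hAm h2,
      coeff_mul_add_eq_of_natDegree_le hA h1, ha,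
      Polynomial.coeff_X_add_one_pow, Nat.choose_self, negX_pow_coeff]
    ring
  have hCsum : (((X : ℝ[X]) + 1) ^ (r - 1) + (-X) ^ (r - 1)).coeff (r - 1)
      = 1 + (-1 : ℝ) ^ (r - 1) := by
    rw [Polynomial.coeff_add, Polynomial.coeff_X_add_one_pow, Nat.choose_self,
      negX_pow_coeff]
    simp
  have hCdeg' : (((X : ℝ[X]) + 1) ^ (r - 1) + (-X) ^ (r - 1)).natDegree ≤ r - 1 := by
    compute_degree
  have hBCtop : (n : ℝ) * BC.coeff n = (1 + (-1 : ℝ) ^ (r - 1)) * (-1 : ℝ) ^ s := by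
    have h := delta_top_coeff BC n hBCdeg npos
    rw [hBC, topcoeff _ _ hCdeg' hCsum] at h
    exact h.symm
  have hBBtop : (n : ℝ) * BB.coeff n = Q.coeff (r - 1) * (-1 : ℝ) ^ s := by
    have h := delta_top_coeff BB n hBBdeg npos
    rw [hBB, topcoeff _ _ hQdeg rfl] at h
    exact h.symm
  have key : 1 + (-1 : ℝ) ^ (r - 1) = 1 - (-1 : ℝ) ^ r := by
    conv_rhs => rw [show r = (r - 1) + 1 from by omega]
    rw [pow_succ]
    ring
  rw [sum_zero_pow (BC.coeff) n, sum_zero_pow (BB.coeff) n]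
  refine ⟨?_, ?_, ?_⟩
  · have hc : BC.coeff n = 2 * BB.coeff n := by
      have heq : (n : ℝ) * BC.coeff n = (n : ℝ) * (2 * BB.coeff n) := by
        rw [hBCtop, key, show (n : ℝ) * (2 * BB.coeff n) = 2 * ((n : ℝ) * BB.coeff n) from
          by ring, hBBtop]
        rw [← hQc]
        ring
      exact mul_left_cancel₀ hnR heq
    rw [hc, show C (2 * BB.coeff n) = 2 * C (BB.coeff n) from by
      rw [Polynomial.C_mul, map_ofNat]]
    ring
  · intro hodd
    have hev : Even (r - 1) := Nat.Odd.sub_odd hodd odd_one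
    have h1 : (-1 : ℝ) ^ (r - 1) = 1 := hev.neg_one_pow
    have hcast : ((r : ℝ) + 2 * s) = (n : ℝ) := by rw [hn]; push_cast; ring
    have hc : BC.coeff n = (-1 : ℝ) ^ s * 2 / ((r : ℝ) + 2 * s) := by
      rw [hcast, eq_div_iff hnR]
      rw [mul_comm (BC.coeff n) (n : ℝ)] at *
      rw [hBCtop, h1]
      ring
    rw [hc]
  · intro hev
    have hodd1 : Odd (r - 1) := Nat.Even.sub_odd hr hev odd_one
    have h1 : (-1 : ℝ) ^ (r - 1) = -1 := hodd1.neg_one_pow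
    have hc : BC.coeff n = 0 := by
      have hz : (n : ℝ) * BC.coeff n = 0 := by rw [hBCtop, h1]; ring
      exact (mul_eq_zero.mp hz).resolve_left hnR
    rw [hc]
    simp
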